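/- Let $\varphi(x,t) = (\sqrt{x(1-t)} + \sqrt{t(1-x)})^2$ and fix $t \in (0,1)$. Then for every $x \in (0, 1-t)$, the inequality $\left(\log\frac{\varphi(x,t)}{x} - \log\frac{1 - \varphi(x,t)}{1-x}\right) \partial_x \varphi(x,t) \leq \frac{\varphi(x,t)}{x} - \frac{1 - \varphi(x,t)}{1-x}$ holds. -/

import Mathlib

/-- The basic scalar inequality: `(log a - log b) * sqrt (a*b) ≤ a - b` for `0 < b ≤ a`. -/
lemma log_mul_sqrt_le (a b : ℝ) (hb : 0 < b) (hba : b ≤ a) :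
    (Real.log a - Real.log b) * Real.sqrt (a * b) ≤ a - b := by
  have ha : 0 < a := hb.trans_le hba
  set v : ℝ := Real.log a - Real.log b with hv
  have hv0 : 0 ≤ v := sub_nonneg.2 (Real.log_le_log hb hba)
  have hexp : Real.exp v = a / b := by
    rw [hv, Real.exp_sub, Real.exp_log ha, Real.exp_log hb]
  have hsq : Real.sqrt (a * b) = b * Real.exp (v / 2) := by
    rw [show a * b = (b * Real.exp (v / 2)) ^ 2 by
      rw [mul_pow, ← Real.exp_nat_mul, show (2:ℕ) * (v/2) = v by push_cast; ring, hexp]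
      field_simp]
    exact Real.sqrt_sq (by positivity)
  have hs : v / 2 ≤ Real.sinh (v / 2) := Real.self_le_sinh_iff.2 (by linarith)
  have hsinh : Real.sinh (v / 2) = (Real.exp (v / 2) - Real.exp (-(v / 2))) / 2 :=
    Real.sinh_eq _
  have hkey : v * Real.exp (v / 2) ≤ Real.exp v - 1 := by
    have h1 : v * Real.exp (v / 2) ≤ 2 * Real.sinh (v / 2) * Real.exp (v / 2) := by
      have := Real.exp_pos (v / 2)
      nlinarith
    have h2 : 2 * Real.sinh (v / 2) * Real.exp (v / 2) = Real.exp v - 1 := by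
      rw [hsinh]
      have : Real.exp (v / 2) * Real.exp (v / 2) = Real.exp v := by
        rw [← Real.exp_add]; ring_nf
      have h3 : Real.exp (-(v / 2)) * Real.exp (v / 2) = 1 := by
        rw [← Real.exp_add]; simp
      nlinarith
    linarith
  rw [hsq]
  calc v * (b * Real.exp (v / 2)) = b * (v * Real.exp (v / 2)) := by ring
    _ ≤ b * (Real.exp v - 1) := by
        apply mul_le_mul_of_nonneg_left hkey hb.le
    _ = a - b := by rw [hexp]; field_simp

set_option maxHeartbeats 1000000 in
theorem stmt_17 (t : ℝ) (ht : t ∈ Set.Ioo (0 : ℝ) 1) (x : ℝ)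
    (hx : x ∈ Set.Ioo (0 : ℝ) (1 - t)) :
    let φ : ℝ → ℝ := fun u => (Real.sqrt (u * (1 - t)) + Real.sqrt (t * (1 - u))) ^ 2
    (Real.log (φ x / x) - Real.log ((1 - φ x) / (1 - x))) * deriv φ x
      ≤ φ x / x - (1 - φ x) / (1 - x) := by
  obtain ⟨ht0, ht1⟩ := ht
  obtain ⟨hx0, hx1⟩ := hx
  intro φ
  have h1t : 0 < 1 - t := by linarith
  have h1x : 0 < 1 - x := by linarith
  have h1xt : 0 < 1 - x - t := by linarith
  set p := Real.sqrt (x * (1 - t)) with hpdef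
  set q := Real.sqrt (t * (1 - x)) with hqdef
  have hp : 0 < p := Real.sqrt_pos.2 (by positivity)
  have hq : 0 < q := Real.sqrt_pos.2 (by positivity)
  have hp2 : p ^ 2 = x * (1 - t) := Real.sq_sqrt (by positivity)
  have hq2 : q ^ 2 = t * (1 - x) := Real.sq_sqrt (by positivity)
  -- derivative of φ at x
  have hd1 : HasDerivAt (fun u : ℝ => Real.sqrt (u * (1 - t))) (1 / (2 * p) * (1 - t)) x := by
    have hinner : HasDerivAt (fun u : ℝ => u * (1 - t)) (1 - t) x := by
      simpa using (hasDerivAt_id x).mul_const (1 - t)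
    exact (Real.hasDerivAt_sqrt (by positivity : x * (1 - t) ≠ 0)).comp x hinner
  have hd2 : HasDerivAt (fun u : ℝ => Real.sqrt (t * (1 - u))) (1 / (2 * q) * (-t)) x := by
    have hinner : HasDerivAt (fun u : ℝ => t * (1 - u)) (-t) x := by
      have := ((hasDerivAt_id x).const_sub (1 : ℝ)).const_mul t
      simpa using this
    exact (Real.hasDerivAt_sqrt (by positivity : t * (1 - x) ≠ 0)).comp x hinner
  have hφd : HasDerivAt φ
      (2 * (p + q) ^ 1 * (1 / (2 * p) * (1 - t) + 1 / (2 * q) * (-t))) x := by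
    exact ((hd1.add hd2).pow 2).congr_deriv (by rw [hpdef, hqdef]; norm_num)
  have hDval : deriv φ x = (p + q) * ((1 - t) * q - t * p) / (p * q) := by
    rw [hφd.deriv]
    field_simp
    ring
  have hnum : 0 < (1 - t) * q - t * p := by
    have hss : 0 < (1 - t) * q + t * p := by positivity
    have hp2' : (t * p) ^ 2 = t ^ 2 * (x * (1 - t)) := by rw [mul_pow, hp2]
    have hq2' : ((1 - t) * q) ^ 2 = (1 - t) ^ 2 * (t * (1 - x)) := by rw [mul_pow, hq2]
    nlinarith [hss, hp2', hq2', mul_pos (mul_pos ht0 h1t) h1xt]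
  have hDpos : 0 ≤ deriv φ x := by
    rw [hDval]
    exact div_nonneg (mul_nonneg (by positivity) hnum.le) (by positivity)
  have hφx : φ x = (p + q) ^ 2 := rfl
  have hφgt : x < (p + q) ^ 2 := by
    rcases le_or_gt x (1 / 2) with h | h
    · nlinarith [mul_pos hp hq, hp2, hq2]
    · have hpq4 : (2 * (p * q)) ^ 2 = 4 * (x * (1 - t)) * (t * (1 - x)) := by
        rw [mul_pow, mul_pow, hp2, hq2]; ring
      have hpos : 0 < t * (4 * x * (1 - x) - t) := by nlinarith
      nlinarith [mul_pos hp hq, hpq4, hpos]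
  have hφlt : (p + q) ^ 2 < 1 := by
    have hpq2 : (p * q) ^ 2 = (x * t) * ((1 - x) * (1 - t)) := by
      rw [mul_pow, hp2, hq2]; ring
    have hAB : 0 < x * t + (1 - x) * (1 - t) := by positivity
    have key : (x * t + (1 - x) * (1 - t)) ^ 2 - (2 * (p * q)) ^ 2 = (1 - x - t) ^ 2 := by
      linear_combination (-4 : ℝ) * hpq2
    have hsum : 0 < 2 * (p * q) + (x * t + (1 - x) * (1 - t)) := by positivity
    have h2pq : 2 * (p * q) < x * t + (1 - x) * (1 - t) := by
      nlinarith [key, hsum, mul_pos h1xt h1xt]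
    nlinarith [h2pq, hp2, hq2]
  set a := φ x / x with hadef
  set b := (1 - φ x) / (1 - x) with hbdef
  have hbpos : 0 < b := div_pos (by rw [hφx]; linarith) h1x
  have hba : b ≤ a := by
    rw [hadef, hbdef, div_le_div_iff₀ h1x hx0, hφx]
    nlinarith [hφgt]
  have e1 : ((1 - t) * q - t * p) ^ 2 = t * (1 - t) * (1 - (p + q) ^ 2) := by
    linear_combination (1 - t) * hq2 + t * hp2
  have e2 : (p * q) ^ 2 = x * (1 - x) * t * (1 - t) := by
    rw [mul_pow, hp2, hq2]; ring
  have hab : a * b = (deriv φ x) ^ 2 := by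
    rw [hadef, hbdef, hDval, hφx, div_pow, mul_pow, e1, e2]
    field_simp
  have hsqrt : Real.sqrt (a * b) = deriv φ x := by
    rw [hab]; exact Real.sqrt_sq hDpos
  have := log_mul_sqrt_le a b hbpos hba
  rw [hsqrt] at this
  exact this
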